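/- Let γ ∈ (0,1], C > 0 with 2C − 2^{1−γ} > 0. Let (N_i)_{i∈ℕ} be positive-integer-valued random variables and (A_n)_{n∈ℕ} random finite subsets of ℕ with A_n ⊆ A_{n+1} for all n and #A_n → ∞ with ∑_{i∈A_n}(N_i)^γ → ∞. Let (Z_{i,k}) be i.i.d. exponential(1) random variables independent of ((N_i),(A_n)). Then almost surely there exists m such that for all n ≥ m, ∑_{i∈A_n} (∑_{k=1}^{N_i} Z_{i,k})^γ ≥ c ∑_{i∈A_n} (N_i)^γ for a deterministic constant c > 0. -/

import Mathlib

open MeasureTheory ProbabilityTheory Filter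

private lemma dyadic19 {x : ℝ} {J : ℕ} (hx : (2:ℝ)^J ≤ x) :
    ∃ j, J ≤ j ∧ (2:ℝ)^j ≤ x ∧ x < 2^(j+1) := by
  classical
  set P : ℕ → Prop := fun j => (2:ℝ)^j ≤ x with hP
  have hcast : ∀ k : ℕ, P k → k ≤ ⌈x⌉₊ := by
    intro k hk
    have h1 : (k:ℝ) ≤ x := le_trans (by exact_mod_cast (Nat.lt_two_pow_self (n := k)).le) hk
    exact_mod_cast le_trans h1 (Nat.le_ceil x)
  set b := ⌈x⌉₊
  have hJb : J ≤ b := hcast J hx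
  refine ⟨Nat.findGreatest P b, Nat.le_findGreatest (P := P) hJb hx,
    Nat.findGreatest_spec (P := P) hJb hx, ?_⟩
  by_contra h
  push_neg at h
  have hsucc : Nat.findGreatest P b + 1 ≤ b := hcast _ h
  exact Nat.findGreatest_is_greatest (P := P) (Nat.lt_succ_self _) hsucc h

/-- Pointwise bound: `(N^γ/N) * ∑ min(max z 0, 1) ≤ (∑ z)^γ` for nonneg `z`. -/
private lemma lemB19 {γ : ℝ} (hγ0 : 0 < γ) (hγ1 : γ ≤ 1) {n : ℕ} (hn : 1 ≤ n)
    (z : ℕ → ℝ) (hz : ∀ k, 0 ≤ z k) :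
    ((n:ℝ)^γ / n) * ∑ k ∈ Finset.range n, min (max (z k) 0) 1
      ≤ (∑ k ∈ Finset.range n, z k)^γ := by
  have hnpos : (0:ℝ) < n := by exact_mod_cast hn
  set s := ∑ k ∈ Finset.range n, min (max (z k) 0) 1 with hs
  have hs0 : 0 ≤ s := Finset.sum_nonneg fun k _ => le_min (le_max_right _ _) zero_le_one
  have hx0 : 0 ≤ ∑ k ∈ Finset.range n, z k := Finset.sum_nonneg fun k _ => hz k
  have hsx : s ≤ ∑ k ∈ Finset.range n, z k := by
    apply Finset.sum_le_sum
    intro k _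
    calc min (max (z k) 0) 1 ≤ max (z k) 0 := min_le_left _ _
    _ = z k := max_eq_left (hz k)
  have hsn : s ≤ (n:ℝ) := by
    calc s ≤ ∑ _k ∈ Finset.range n, (1:ℝ) := Finset.sum_le_sum fun k _ => min_le_right _ _
    _ = n := by simp
  rcases eq_or_lt_of_le hs0 with h0 | h0
  · rw [← h0, mul_zero]
    exact Real.rpow_nonneg hx0 γ
  · have h1 : s ^ γ ≤ (∑ k ∈ Finset.range n, z k) ^ γ :=
      Real.rpow_le_rpow hs0 hsx hγ0.le
    refine le_trans ?_ h1
    have h2 : (n:ℝ) ^ (γ - 1) ≤ s ^ (γ - 1) :=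
      Real.rpow_le_rpow_of_nonpos h0 hsn (by linarith)
    have h3 : (n:ℝ) ^ (γ - 1) = (n:ℝ)^γ / n := by
      rw [Real.rpow_sub hnpos, Real.rpow_one]
    have h4 : s ^ γ = s ^ (γ - 1) * s := by
      rw [← Real.rpow_add_one (ne_of_gt h0)]; ring_nf
    rw [h4, ← h3]
    exact mul_le_mul_of_nonneg_right h2 hs0

private lemma lemA19 {Ω : Type*} [MeasurableSpace Ω] (ν : Measure Ω) [IsProbabilityMeasure ν]
    (γ : ℝ) (hγ0 : 0 < γ) (hγ1 : γ ≤ 1)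
    (Nx : ℕ → ℕ) (hN : ∀ i, 1 ≤ Nx i)
    (Ax : ℕ → Finset ℕ) (hmono : ∀ n, Ax n ⊆ Ax (n+1))
    (hS : Tendsto (fun n => ∑ i ∈ Ax n, ((Nx i : ℝ)) ^ γ) atTop atTop)
    (ZZ : ℕ × ℕ → Ω → ℝ) (hZm : ∀ p, Measurable (ZZ p))
    (htail : ∀ p (t : ℝ), 0 ≤ t → ν {ω | t ≤ ZZ p ω} = ENNReal.ofReal (Real.exp (-t)))
    (hindep : iIndepFun ZZ ν) :
    ∀ᵐ ω ∂ν, ∃ m : ℕ, ∀ n ≥ m,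
      (1/16 : ℝ) * ∑ i ∈ Ax n, ((Nx i : ℝ)) ^ γ
        ≤ ∑ i ∈ Ax n, (∑ k ∈ Finset.range (Nx i), ZZ (i, k) ω) ^ γ := by
  classical
  set a : ℕ → ℝ := fun i => (Nx i : ℝ) ^ γ / (Nx i) with ha
  set S : ℕ → ℝ := fun n => ∑ i ∈ Ax n, ((Nx i : ℝ)) ^ γ with hSdef
  set W : ℕ × ℕ → Ω → ℝ := fun p ω => min (max (ZZ p ω) 0) 1 with hWdef
  set P : ℕ → Finset (ℕ × ℕ) :=
    fun n => (Ax n).biUnion (fun i => (Finset.range (Nx i)).image (fun k => (i, k))) with hPdef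
  set X : ℕ × ℕ → Ω → ℝ := fun p ω => a p.1 * W p ω with hXdef
  set R : ℕ → Ω → ℝ := fun n => ∑ p ∈ P n, X p with hRdef
  -- basic facts
  have hNpos : ∀ i, (0:ℝ) < Nx i := fun i => by exact_mod_cast hN i
  have hNγpos : ∀ i, (0:ℝ) ≤ (Nx i : ℝ) ^ γ := fun i => Real.rpow_nonneg (Nat.cast_nonneg _) _
  have hNγ : ∀ i, ((Nx i : ℝ)) ^ γ ≤ (Nx i : ℝ) := by
    intro i
    calc ((Nx i : ℝ)) ^ γ ≤ ((Nx i : ℝ)) ^ (1:ℝ) :=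
      Real.rpow_le_rpow_of_exponent_le (by exact_mod_cast hN i) hγ1
    _ = (Nx i : ℝ) := Real.rpow_one _
  have ha0 : ∀ i, 0 ≤ a i := fun i => div_nonneg (hNγpos i) (hNpos i).le
  have ha1 : ∀ i, a i ≤ 1 := fun i => (div_le_one (hNpos i)).2 (hNγ i)
  have haN : ∀ i, a i * (Nx i : ℝ) = (Nx i : ℝ) ^ γ := fun i =>
    div_mul_cancel₀ _ (hNpos i).ne'
  have hW01 : ∀ p ω, W p ω ∈ Set.Icc (0:ℝ) 1 :=
    fun p ω => ⟨le_min (le_max_right _ _) zero_le_one, min_le_right _ _⟩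
  have hWm : ∀ p, Measurable (W p) :=
    fun p => ((hZm p).max measurable_const).min measurable_const
  have hXm : ∀ p, Measurable (X p) := fun p => (hWm p).const_mul _
  have hX01 : ∀ p ω, X p ω ∈ Set.Icc (0:ℝ) 1 := by
    intro p ω
    constructor
    · exact mul_nonneg (ha0 _) (hW01 p ω).1
    · calc a p.1 * W p ω ≤ 1 * 1 :=
        mul_le_mul (ha1 _) (hW01 p ω).2 (hW01 p ω).1 zero_le_one
      _ = 1 := by ring
  have hWmem : ∀ p, MemLp (W p) 2 ν :=
    fun p => memLp_of_bounded (Eventually.of_forall (hW01 p)) (hWm p).aestronglyMeasurable 2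
  have hXmem : ∀ p, MemLp (X p) 2 ν :=
    fun p => memLp_of_bounded (Eventually.of_forall (hX01 p)) (hXm p).aestronglyMeasurable 2
  have hXint : ∀ p, Integrable (X p) ν := fun p => (hXmem p).integrable one_le_two
  have hXindep : iIndepFun X ν := by
    have h := hindep.comp (fun p (z : ℝ) => a p.1 * min (max z 0) 1)
      (fun p => ((measurable_id.max measurable_const).min measurable_const).const_mul _)
    exact h
  have hRmem : ∀ n, MemLp (R n) 2 ν := fun n => memLp_finset_sum' _ (fun p _ => hXmem p)
  have hpair : ∀ n, Set.Pairwise ↑(P n) fun p q => IndepFun (X p) (X q) ν :=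
    fun n p _ q _ hpq => hXindep.indepFun hpq
  -- rewriting sums over P n
  have hPsum : ∀ (n : ℕ) (f : ℕ × ℕ → ℝ),
      ∑ p ∈ P n, f p = ∑ i ∈ Ax n, ∑ k ∈ Finset.range (Nx i), f (i, k) := by
    intro n f
    rw [hPdef]
    rw [Finset.sum_biUnion]
    · refine Finset.sum_congr rfl fun i _ => ?_
      rw [Finset.sum_image (fun x _ y _ h => by simpa using h)]
    · intro i _ j _ hij
      simp only [Finset.disjoint_left]
      intro p hp hq
      simp only [Finset.mem_image, Finset.mem_range] at hp hq
      obtain ⟨k, _, rfl⟩ := hp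
      obtain ⟨k', _, hk'⟩ := hq
      have : j = i := congrArg Prod.fst hk'
      exact hij this.symm
  have hPmono : ∀ {m n : ℕ}, m ≤ n → P m ⊆ P n := by
    intro m n hmn
    exact Finset.biUnion_subset_biUnion_of_subset_left _
      ((monotone_nat_of_le_succ hmono) hmn)
  -- variance bound
  have hvarX : ∀ p, variance (X p) ν ≤ a p.1 ^ 2 := by
    intro p
    have h1 : variance (X p) ν = a p.1 ^ 2 * variance (W p) ν := variance_const_mul _ _ _
    have h2 : variance (W p) ν ≤ 1 := by
      refine le_trans (variance_le_expectation_sq (hWm p).aestronglyMeasurable) ?_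
      have hle : ∀ ω, (W p ^ 2) ω ≤ 1 := by
        intro ω
        have h := hW01 p ω
        simpa [pow_two] using mul_le_one₀ h.2 h.1 h.2
      calc (∫ ω, (W p ^ 2) ω ∂ν) ≤ ∫ _ω, (1:ℝ) ∂ν :=
        integral_mono (hWmem p).integrable_sq (integrable_const 1) hle
      _ = 1 := by simp
    calc variance (X p) ν = a p.1 ^ 2 * variance (W p) ν := h1
    _ ≤ a p.1 ^ 2 * 1 := mul_le_mul_of_nonneg_left h2 (sq_nonneg _)
    _ = a p.1 ^ 2 := by ring
  have hVar : ∀ n, variance (R n) ν ≤ S n := by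
    intro n
    rw [hRdef]
    rw [IndepFun.variance_sum (fun p _ => hXmem p) (hpair n)]
    calc ∑ p ∈ P n, variance (X p) ν ≤ ∑ p ∈ P n, a p.1 ^ 2 :=
      Finset.sum_le_sum (fun p _ => hvarX p)
    _ = ∑ i ∈ Ax n, ∑ _k ∈ Finset.range (Nx i), a i ^ 2 := hPsum n _
    _ = ∑ i ∈ Ax n, (Nx i : ℝ) * a i ^ 2 := by
        refine Finset.sum_congr rfl fun i _ => ?_
        rw [Finset.sum_const, Finset.card_range, nsmul_eq_mul]
    _ ≤ S n := by
        refine Finset.sum_le_sum fun i _ => ?_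
        have h1 : (Nx i : ℝ) * a i ^ 2 = (Nx i : ℝ) ^ γ * a i := by
          rw [pow_two, ← mul_assoc, mul_comm (Nx i : ℝ) (a i), haN i]
        rw [h1]
        calc (Nx i : ℝ) ^ γ * a i ≤ (Nx i : ℝ) ^ γ * 1 :=
          mul_le_mul_of_nonneg_left (ha1 i) (hNγpos i)
        _ = (Nx i : ℝ) ^ γ := by ring
  -- mean bound
  have hEW : ∀ p, (1/4 : ℝ) ≤ ∫ ω, W p ω ∂ν := by
    intro p
    set Sp : Set Ω := {ω | (1/2 : ℝ) ≤ ZZ p ω} with hSp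
    have hSpm : MeasurableSet Sp := measurableSet_le measurable_const (hZm p)
    have hind : ∀ ω, (1/2 : ℝ) * Sp.indicator (fun _ => (1:ℝ)) ω ≤ W p ω := by
      intro ω
      by_cases hω : ω ∈ Sp
      · rw [Set.indicator_of_mem hω]
        have h1 : (1/2 : ℝ) ≤ ZZ p ω := hω
        have : (1/2 : ℝ) ≤ min (max (ZZ p ω) 0) 1 :=
          le_min (le_trans h1 (le_max_left _ _)) (by norm_num)
        simpa [hWdef] using this
      · rw [Set.indicator_of_notMem hω]
        simpa using (hW01 p ω).1
    have hint1 : Integrable (fun ω => (1/2 : ℝ) * Sp.indicator (fun _ => (1:ℝ)) ω) ν := by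
      exact ((integrable_const (1:ℝ)).indicator hSpm).const_mul _
    have hint2 : Integrable (W p) ν := (hWmem p).integrable one_le_two
    have h2 := integral_mono hint1 hint2 hind
    have h3 : ∫ ω, (1/2 : ℝ) * Sp.indicator (fun _ => (1:ℝ)) ω ∂ν
        = (1/2 : ℝ) * (ν Sp).toReal := by
      rw [integral_const_mul, integral_indicator_const _ hSpm]
      simp [measureReal_def]
    have h4 : ν Sp = ENNReal.ofReal (Real.exp (-(1/2))) := htail p (1/2) (by norm_num)
    have h5 : (ν Sp).toReal = Real.exp (-(1/2)) := by
      rw [h4, ENNReal.toReal_ofReal (Real.exp_nonneg _)]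
    have h6 : (1/2 : ℝ) ≤ Real.exp (-(1/2)) := by
      rw [Real.exp_neg]
      have h7 : Real.exp (1/2) * Real.exp (1/2) = Real.exp 1 := by
        rw [← Real.exp_add]; norm_num
      have h8 : Real.exp 1 < 2.7182818286 := Real.exp_one_lt_d9
      have h9 : 0 < Real.exp (1/2) := Real.exp_pos _
      have h10 : Real.exp (1/2) ≤ 2 := by nlinarith
      rw [le_inv_comm₀ (by norm_num) h9] at *
      · nlinarith
    rw [h3, h5] at h2
    nlinarith
  have hER : ∀ n, S n / 4 ≤ ∫ ω, R n ω ∂ν := by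
    intro n
    have h1 : ∫ ω, R n ω ∂ν = ∑ p ∈ P n, ∫ ω, X p ω ∂ν := by
      rw [hRdef]
      have : ∀ ω, (∑ p ∈ P n, X p) ω = ∑ p ∈ P n, X p ω := by
        intro ω; simp [Finset.sum_apply]
      rw [integral_congr_ae (Eventually.of_forall this)]
      exact integral_finset_sum _ (fun p _ => hXint p)
    have h2 : ∀ p : ℕ × ℕ, a p.1 * (1/4) ≤ ∫ ω, X p ω ∂ν := by
      intro p
      have : ∫ ω, X p ω ∂ν = a p.1 * ∫ ω, W p ω ∂ν := by
        rw [hXdef]; exact integral_const_mul _ _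
      rw [this]
      exact mul_le_mul_of_nonneg_left (hEW p) (ha0 _)
    calc S n / 4 = ∑ i ∈ Ax n, ((Nx i : ℝ) ^ γ) / 4 := by
          rw [hSdef, Finset.sum_div]
    _ = ∑ p ∈ P n, a p.1 * (1/4) := by
          rw [hPsum n (fun p => a p.1 * (1/4))]
          refine Finset.sum_congr rfl fun i _ => ?_
          have hred : (∑ k ∈ Finset.range (Nx i), a (i, k).1 * (1/4 : ℝ))
              = (Nx i : ℝ) * (a i * (1/4)) := by
            rw [show (∑ k ∈ Finset.range (Nx i), a (i, k).1 * (1/4 : ℝ))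
                = ∑ _k ∈ Finset.range (Nx i), a i * (1/4 : ℝ) from
              Finset.sum_congr rfl (fun k _ => rfl), Finset.sum_const, Finset.card_range,
              nsmul_eq_mul]
          rw [hred, show (Nx i : ℝ) * (a i * (1/4)) = (a i * (Nx i : ℝ)) * (1/4) by ring, haN i]
          ring
    _ ≤ ∑ p ∈ P n, ∫ ω, X p ω ∂ν := Finset.sum_le_sum (fun p _ => h2 p)
    _ = ∫ ω, R n ω ∂ν := h1.symm
  -- monotonicity
  have hSmono : Monotone S := monotone_nat_of_le_succ fun n =>
    Finset.sum_le_sum_of_subset_of_nonneg (hmono n) (fun i _ _ => hNγpos i)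
  have hRmono : ∀ m n, m ≤ n → ∀ ω, R m ω ≤ R n ω := by
    intro m n hmn ω
    rw [hRdef]
    simp only [Finset.sum_apply]
    exact Finset.sum_le_sum_of_subset_of_nonneg (hPmono hmn)
      (fun p _ _ => (hX01 p ω).1)
  -- dyadic times
  have hex : ∀ j : ℕ, ∃ n, (2:ℝ)^j ≤ S n := fun j => (hS.eventually_ge_atTop _).exists
  set nj : ℕ → ℕ := fun j => Nat.find (hex j) with hnjdef
  have hnj1 : ∀ j, (2:ℝ)^j ≤ S (nj j) := fun j => Nat.find_spec (hex j)
  have hSnjpos : ∀ j, 0 < S (nj j) := fun j => lt_of_lt_of_le (pow_pos two_pos j) (hnj1 j)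
  -- bad events
  set Bad : ℕ → Set Ω := fun j =>
    {ω | (1/8) * S (nj j) ≤ |R (nj j) ω - ν[R (nj j)]|} with hBaddef
  have hBad : ∀ j, ν (Bad j) ≤ ENNReal.ofReal (64 / 2^j) := by
    intro j
    have hc : 0 < (1/8) * S (nj j) := by
      have := hSnjpos j; nlinarith
    refine le_trans (meas_ge_le_variance_div_sq (hRmem (nj j)) hc) (ENNReal.ofReal_le_ofReal ?_)
    have h1 : variance (R (nj j)) ν / ((1/8) * S (nj j))^2
        ≤ S (nj j) / ((1/8) * S (nj j))^2 := by
      apply div_le_div_of_nonneg_right (hVar (nj j)) (by positivity)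
    have h2 : S (nj j) / ((1/8) * S (nj j))^2 = 64 / S (nj j) := by
      have hSne : S (nj j) ≠ 0 := (hSnjpos j).ne'
      field_simp
      ring
    have h3 : (64:ℝ) / S (nj j) ≤ 64 / 2^j := by
      rw [div_le_div_iff₀ (hSnjpos j) (pow_pos two_pos j)]
      nlinarith [hnj1 j]
    calc variance (R (nj j)) ν / ((1/8) * S (nj j))^2 ≤ S (nj j) / ((1/8) * S (nj j))^2 := h1
    _ = 64 / S (nj j) := h2
    _ ≤ 64 / 2^j := h3
  have hBadsum : (∑' j, ν (Bad j)) ≠ ⊤ := by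
    have hsummable : Summable (fun j : ℕ => (64:ℝ) / 2^j) := by
      have := (summable_geometric_two).mul_left (64:ℝ)
      refine this.congr fun j => ?_
      rw [one_div, inv_pow, div_eq_mul_inv]
    have h1 : (∑' j, ν (Bad j)) ≤ ∑' j, ENNReal.ofReal (64 / 2^j) :=
      ENNReal.tsum_le_tsum hBad
    have h2 : (∑' j : ℕ, ENNReal.ofReal (64 / 2^j)) = ENNReal.ofReal (∑' j : ℕ, (64:ℝ)/2^j) :=
      (ENNReal.ofReal_tsum_of_nonneg (fun j => by positivity) hsummable).symm
    rw [h2] at h1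
    exact ne_top_of_le_ne_top ENNReal.ofReal_ne_top h1
  have hBC := ae_eventually_notMem hBadsum
  have hZnn_ae : ∀ᵐ ω ∂ν, ∀ p : ℕ × ℕ, 0 ≤ ZZ p ω := by
    rw [ae_all_iff]
    intro p
    have hms : MeasurableSet {ω | (0:ℝ) ≤ ZZ p ω} := measurableSet_le measurable_const (hZm p)
    have h1 : ν {ω | (0:ℝ) ≤ ZZ p ω} = 1 := by
      have := htail p 0 le_rfl
      simpa using this
    rw [ae_iff]
    have hcompl : {ω | ¬ (0:ℝ) ≤ ZZ p ω} = {ω | (0:ℝ) ≤ ZZ p ω}ᶜ := rfl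
    rw [hcompl, measure_compl hms (measure_ne_top _ _), h1, measure_univ]
    simp
  filter_upwards [hBC, hZnn_ae] with ω hω hnn
  obtain ⟨J, hJ⟩ := eventually_atTop.1 hω
  refine ⟨nj J, fun n hn => ?_⟩
  have hSn2 : (2:ℝ)^J ≤ S n := le_trans (hnj1 J) (hSmono (by exact hn))
  obtain ⟨j, hJj, h2j, h2j1⟩ := dyadic19 hSn2
  have hnjn : nj j ≤ n := Nat.find_min' (hex j) h2j
  have hωj : ω ∉ Bad j := hJ j hJj
  have habs : |R (nj j) ω - ν[R (nj j)]| < (1/8) * S (nj j) := not_le.1 hωj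
  have hRlow : S (nj j) / 8 ≤ R (nj j) ω := by
    have hE := hER (nj j)
    have h := abs_lt.1 habs
    have h1 := h.1
    linarith
  have hchain : (1/16) * S n ≤ R n ω := by
    have h5 : R (nj j) ω ≤ R n ω := hRmono _ _ hnjn ω
    have h6 : (2:ℝ)^j ≤ S (nj j) := hnj1 j
    have h7 : (2:ℝ)^(j+1) = 2 * 2^j := by ring
    rw [h7] at h2j1
    linarith
  have hRT : R n ω ≤ ∑ i ∈ Ax n, (∑ k ∈ Finset.range (Nx i), ZZ (i, k) ω) ^ γ := by
    have hRn : R n ω = ∑ i ∈ Ax n, a i * ∑ k ∈ Finset.range (Nx i), W (i, k) ω := by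
      rw [hRdef]
      simp only [Finset.sum_apply]
      rw [hPsum n (fun p => X p ω)]
      refine Finset.sum_congr rfl fun i _ => ?_
      rw [Finset.mul_sum]
    rw [hRn]
    refine Finset.sum_le_sum fun i _ => ?_
    exact lemB19 hγ0 hγ1 (hN i) (fun k => ZZ (i, k) ω) (fun k => hnn (i, k))
  calc (1/16 : ℝ) * S n ≤ R n ω := hchain
  _ ≤ _ := hRT

/-- Let `γ ∈ (0,1]` and `C > 0` with `2C - 2^(1-γ) > 0`. Let `(N_i)` be positive-integer
random variables and `(A_n)` random non-decreasing finite subsets of `ℕ` with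
`#A_n → ∞` and `∑_{i∈A_n} N_i^γ → ∞`. Let `(Z_{i,k})` be i.i.d. exponential(1) random
variables independent of `((N_i),(A_n))`. Then there is a deterministic constant `c > 0`
such that almost surely, for all `n` large enough,
`∑_{i∈A_n} (∑_{k=1}^{N_i} Z_{i,k})^γ ≥ c ∑_{i∈A_n} N_i^γ`. -/
theorem stmt19 {Ω : Type*} [MeasurableSpace Ω] (μ : Measure Ω) [IsProbabilityMeasure μ]
    (γ : ℝ) (hγ0 : 0 < γ) (hγ1 : γ ≤ 1)
    (C : ℝ) (hC0 : 0 < C) (hC : 0 < 2 * C - 2 ^ (1 - γ))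
    (N : ℕ → Ω → ℕ) (hNpos : ∀ i ω, 1 ≤ N i ω) (hNmeas : ∀ i, Measurable (N i))
    (A : ℕ → Ω → Finset ℕ)
    (hAmeas : ∀ n i, Measurable (fun ω => decide (i ∈ A n ω)))
    (hAmono : ∀ n ω, A n ω ⊆ A (n + 1) ω)
    (hAcard : ∀ ω, Tendsto (fun n => (A n ω).card) atTop atTop)
    (hAsum : ∀ ω, Tendsto (fun n => ∑ i ∈ A n ω, ((N i ω : ℝ)) ^ γ) atTop atTop)
    (Z : ℕ → ℕ → Ω → ℝ) (hZmeas : ∀ i k, Measurable (Z i k))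
    (hZnn : ∀ i k ω, 0 ≤ Z i k ω)
    (hZexp : ∀ i k (t : ℝ), 0 ≤ t →
      μ {ω | t ≤ Z i k ω} = ENNReal.ofReal (Real.exp (-t)))
    (hZindep : iIndepFun
      (fun ik : ℕ × ℕ => fun ω => Z ik.1 ik.2 ω) μ)
    (hindepNA : IndepFun
      (fun ω => ((fun i => N i ω), (fun n i => decide (i ∈ A n ω))))
      (fun ω => fun ik : ℕ × ℕ => Z ik.1 ik.2 ω) μ) :
    ∃ c : ℝ, 0 < c ∧ ∀ᵐ ω ∂μ, ∃ m : ℕ, ∀ n ≥ m,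
      c * ∑ i ∈ A n ω, ((N i ω : ℝ)) ^ γ
        ≤ ∑ i ∈ A n ω, (∑ k ∈ Finset.range (N i ω), Z i k ω) ^ γ := by
  classical
  refine ⟨1/16, by norm_num, ?_⟩
  set X := (ℕ → ℕ) × (ℕ → ℕ → Bool) with hXty
  set Y := (ℕ × ℕ → ℝ) with hYty
  set ξ : Ω → X := fun ω => ((fun i => N i ω), (fun n i => decide (i ∈ A n ω))) with hξdef
  set ζ : Ω → Y := fun ω => fun ik => Z ik.1 ik.2 ω with hζdef
  have hξm : Measurable ξ :=
    Measurable.prodMk (measurable_pi_lambda _ (fun i => hNmeas i))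
      (measurable_pi_lambda _ (fun n => measurable_pi_lambda _ (fun i => hAmeas n i)))
  have hζm : Measurable ζ := measurable_pi_lambda _ (fun ik => hZmeas ik.1 ik.2)
  set ν₁ : Measure X := μ.map ξ with hν₁def
  set ν₂ : Measure Y := μ.map ζ with hν₂def
  haveI : IsProbabilityMeasure ν₁ := Measure.isProbabilityMeasure_map hξm.aemeasurable
  haveI : IsProbabilityMeasure ν₂ := Measure.isProbabilityMeasure_map hζm.aemeasurable
  have hprod : μ.map (fun ω => (ξ ω, ζ ω)) = ν₁.prod ν₂ :=
    (indepFun_iff_map_prod_eq_prod_map_map hξm.aemeasurable hζm.aemeasurable).1 hindepNA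
  -- the ENNReal-valued sums
  set Se : ℕ → X → ENNReal := fun n x =>
    ∑' i, (if x.2 n i = true then ENNReal.ofReal ((x.1 i : ℝ) ^ γ) else 0) with hSe
  set Te : ℕ → X × Y → ENNReal := fun n p =>
    ∑' i, (if p.1.2 n i = true then
      ENNReal.ofReal ((∑ k ∈ Finset.range (p.1.1 i), p.2 (i, k)) ^ γ) else 0) with hTe
  have hSem : ∀ n, Measurable (Se n) := by
    intro n
    apply Measurable.ennreal_tsum
    intro i
    have hb : Measurable fun x : X => x.2 n i :=
      (measurable_pi_apply i).comp ((measurable_pi_apply n).comp measurable_snd)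
    have hms : MeasurableSet {x : X | x.2 n i = true} := hb (measurableSet_singleton true)
    refine Measurable.ite hms ?_ measurable_const
    exact (measurable_of_countable (fun m : ℕ => ENNReal.ofReal ((m : ℝ) ^ γ))).comp
      ((measurable_pi_apply i).comp measurable_fst)
  have hTem : ∀ n, Measurable (Te n) := by
    intro n
    apply Measurable.ennreal_tsum
    intro i
    have hb : Measurable fun p : X × Y => p.1.2 n i :=
      (measurable_pi_apply i).comp ((measurable_pi_apply n).comp (measurable_snd.comp measurable_fst))
    have hms : MeasurableSet {p : X × Y | p.1.2 n i = true} := hb (measurableSet_singleton true)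
    refine Measurable.ite hms ?_ measurable_const
    have hF : Measurable fun q : Y × ℕ => ∑ k ∈ Finset.range q.2, q.1 (i, k) := by
      apply measurable_from_prod_countable_left
      intro n0
      exact Finset.measurable_sum (Finset.range n0) (fun k _ => measurable_pi_apply (i, k))
    have hinner : Measurable fun p : X × Y => ∑ k ∈ Finset.range (p.1.1 i), p.2 (i, k) :=
      hF.comp (measurable_snd.prodMk ((measurable_pi_apply i).comp (measurable_fst.comp measurable_fst)))
    exact ENNReal.measurable_ofReal.comp
      (((Real.continuous_rpow_const hγ0.le).measurable).comp hinner)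
  set G : Set (X × Y) :=
    {p | ∃ m : ℕ, ∀ n, m ≤ n → ENNReal.ofReal (1/16) * Se n p.1 ≤ Te n p} with hG
  have hGm : MeasurableSet G := by
    have hGeq : G = ⋃ m : ℕ, ⋂ n : ℕ, ⋂ (_ : m ≤ n),
        {p : X × Y | ENNReal.ofReal (1/16) * Se n p.1 ≤ Te n p} := by
      ext p
      simp only [hG, Set.mem_setOf_eq, Set.mem_iUnion, Set.mem_iInter]
    rw [hGeq]
    exact MeasurableSet.iUnion fun m => MeasurableSet.iInter fun n => MeasurableSet.iInter fun _ =>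
      measurableSet_le (((hSem n).comp measurable_fst).const_mul _) (hTem n)
  -- pointwise values on the range of (ξ, ζ)
  have hSeω : ∀ n ω, Se n (ξ ω) = ENNReal.ofReal (∑ i ∈ A n ω, ((N i ω : ℝ)) ^ γ) := by
    intro n ω
    have h1 : ∀ i, (if (ξ ω).2 n i = true then ENNReal.ofReal (((ξ ω).1 i : ℝ) ^ γ) else 0)
        = (if i ∈ A n ω then ENNReal.ofReal (((N i ω : ℝ)) ^ γ) else 0) := by
      intro i
      simp [hξdef, decide_eq_true_eq]
    rw [hSe]
    simp only [h1]
    rw [tsum_eq_sum (s := A n ω) (fun i hi => if_neg hi),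
      Finset.sum_congr rfl (fun i hi => if_pos hi)]
    exact (ENNReal.ofReal_sum_of_nonneg (fun i _ => Real.rpow_nonneg (Nat.cast_nonneg _) _)).symm
  have hTeω : ∀ n ω, Te n (ξ ω, ζ ω)
      = ENNReal.ofReal (∑ i ∈ A n ω, (∑ k ∈ Finset.range (N i ω), Z i k ω) ^ γ) := by
    intro n ω
    have h1 : ∀ i, (if (ξ ω).2 n i = true then
        ENNReal.ofReal ((∑ k ∈ Finset.range ((ξ ω).1 i), (ζ ω) (i, k)) ^ γ) else 0)
        = (if i ∈ A n ω then
            ENNReal.ofReal ((∑ k ∈ Finset.range (N i ω), Z i k ω) ^ γ) else 0) := by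
      intro i
      simp [hξdef, hζdef, decide_eq_true_eq]
    rw [hTe]
    simp only [h1]
    rw [tsum_eq_sum (s := A n ω) (fun i hi => if_neg hi),
      Finset.sum_congr rfl (fun i hi => if_pos hi)]
    refine (ENNReal.ofReal_sum_of_nonneg (fun i _ => ?_)).symm
    exact Real.rpow_nonneg (Finset.sum_nonneg fun k _ => hZnn i k ω) _
  have hiff : ∀ ω, ((ξ ω, ζ ω) ∈ G) ↔ (∃ m : ℕ, ∀ n ≥ m,
      (1/16 : ℝ) * ∑ i ∈ A n ω, ((N i ω : ℝ)) ^ γ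
        ≤ ∑ i ∈ A n ω, (∑ k ∈ Finset.range (N i ω), Z i k ω) ^ γ) := by
    intro ω
    simp only [hG, Set.mem_setOf_eq]
    refine exists_congr fun m => forall_congr' fun n => imp_congr_right fun _ => ?_
    rw [hSeω n ω, hTeω n ω, ← ENNReal.ofReal_mul (by norm_num)]
    exact ENNReal.ofReal_le_ofReal_iff (Finset.sum_nonneg fun i _ =>
      Real.rpow_nonneg (Finset.sum_nonneg fun k _ => hZnn i k ω) _)
  -- the good set of environments
  set H : Set X :=
    {x | (∀ n : ℕ, ∃ b : ℕ, ∀ i, b ≤ i → x.2 n i = false) ∧ (∀ i, 1 ≤ x.1 i) ∧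
         (∀ n i, x.2 n i = true → x.2 (n+1) i = true) ∧
         (∀ M : ℕ, ∃ m : ℕ, ∀ n, m ≤ n → (M : ENNReal) ≤ Se n x)} with hH
  have hHm : MeasurableSet H := by
    have hb : ∀ n i, Measurable fun x : X => x.2 n i := fun n i =>
      (measurable_pi_apply i).comp ((measurable_pi_apply n).comp measurable_snd)
    have h1 : MeasurableSet {x : X | ∀ n : ℕ, ∃ b : ℕ, ∀ i, b ≤ i → x.2 n i = false} := by
      have : {x : X | ∀ n : ℕ, ∃ b : ℕ, ∀ i, b ≤ i → x.2 n i = false}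
          = ⋂ n : ℕ, ⋃ b : ℕ, ⋂ i : ℕ, ⋂ (_ : b ≤ i), {x : X | x.2 n i = false} := by
        ext x; simp only [Set.mem_setOf_eq, Set.mem_iInter, Set.mem_iUnion]
      rw [this]
      exact MeasurableSet.iInter fun n => MeasurableSet.iUnion fun b =>
        MeasurableSet.iInter fun i => MeasurableSet.iInter fun _ =>
          hb n i (measurableSet_singleton false)
    have h2 : MeasurableSet {x : X | ∀ i, 1 ≤ x.1 i} := by
      have : {x : X | ∀ i, 1 ≤ x.1 i} = ⋂ i : ℕ, ((fun x : X => x.1 i) ⁻¹' {0})ᶜ := by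
        ext x
        simp only [Set.mem_iInter, Set.mem_compl_iff, Set.mem_preimage, Set.mem_singleton_iff,
          Set.mem_setOf_eq]
        exact forall_congr' fun i => by omega
      rw [this]
      exact MeasurableSet.iInter fun i =>
        (((measurable_pi_apply i).comp measurable_fst) (measurableSet_singleton 0)).compl
    have h3 : MeasurableSet {x : X | ∀ n i, x.2 n i = true → x.2 (n+1) i = true} := by
      have : {x : X | ∀ n i, x.2 n i = true → x.2 (n+1) i = true}
          = ⋂ n : ℕ, ⋂ i : ℕ, ({x : X | x.2 n i = true}ᶜ ∪ {x : X | x.2 (n+1) i = true}) := by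
        ext x
        simp only [Set.mem_setOf_eq, Set.mem_iInter, Set.mem_union, Set.mem_compl_iff]
        refine forall_congr' fun n => forall_congr' fun i => ?_
        tauto
      rw [this]
      exact MeasurableSet.iInter fun n => MeasurableSet.iInter fun i =>
        ((hb n i (measurableSet_singleton true)).compl.union
          (hb (n+1) i (measurableSet_singleton true)))
    have h4 : MeasurableSet {x : X | ∀ M : ℕ, ∃ m : ℕ, ∀ n, m ≤ n → (M : ENNReal) ≤ Se n x} := by
      have : {x : X | ∀ M : ℕ, ∃ m : ℕ, ∀ n, m ≤ n → (M : ENNReal) ≤ Se n x}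
          = ⋂ M : ℕ, ⋃ m : ℕ, ⋂ n : ℕ, ⋂ (_ : m ≤ n), {x : X | (M : ENNReal) ≤ Se n x} := by
        ext x; simp only [Set.mem_setOf_eq, Set.mem_iInter, Set.mem_iUnion]
      rw [this]
      exact MeasurableSet.iInter fun M => MeasurableSet.iUnion fun m =>
        MeasurableSet.iInter fun n => MeasurableSet.iInter fun _ =>
          measurableSet_le measurable_const (hSem n)
    rw [hH, Set.setOf_and, Set.setOf_and, Set.setOf_and]
    exact h1.inter (h2.inter (h3.inter h4))
  have hξH : ∀ ω, ξ ω ∈ H := by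
    intro ω
    refine ⟨?_, fun i => hNpos i ω, ?_, ?_⟩
    · intro n
      refine ⟨(A n ω).sup id + 1, fun i hi => ?_⟩
      apply decide_eq_false
      intro hmem
      have h := Finset.le_sup (f := id) hmem
      simp only [id] at h
      omega
    · intro n i h
      exact decide_eq_true (hAmono n ω (of_decide_eq_true h))
    · intro M
      obtain ⟨m, hm⟩ := eventually_atTop.1 ((hAsum ω).eventually_ge_atTop (M : ℝ))
      refine ⟨m, fun n hn => ?_⟩
      rw [hSeω n ω]
      calc (M : ENNReal) = ENNReal.ofReal ((M : ℕ) : ℝ) := by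
            rw [ENNReal.ofReal_natCast]
      _ ≤ _ := ENNReal.ofReal_le_ofReal (hm n hn)
  have hν₁H : ν₁ H = 1 := by
    rw [hν₁def, Measure.map_apply hξm hHm]
    have huniv : ξ ⁻¹' H = Set.univ := Set.eq_univ_of_forall hξH
    rw [huniv, measure_univ]
  -- properties of ν₂
  have hν₂tail : ∀ (p : ℕ × ℕ) (t : ℝ), 0 ≤ t →
      ν₂ {y : Y | t ≤ y p} = ENNReal.ofReal (Real.exp (-t)) := by
    intro p t ht
    rw [hν₂def, Measure.map_apply hζm (measurableSet_le measurable_const (measurable_pi_apply p))]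
    exact hZexp p.1 p.2 t ht
  have hν₂indep : iIndepFun
      (fun p : ℕ × ℕ => fun y : Y => y p) ν₂ := by
    rw [iIndepFun_iff_measure_inter_preimage_eq_mul]
    intro Sf sets hsets
    have hmeasi : ∀ p ∈ Sf, MeasurableSet ((fun y : Y => y p) ⁻¹' sets p) :=
      fun p hp => (measurable_pi_apply p) (hsets p hp)
    have hpre : ζ ⁻¹' (⋂ p ∈ Sf, (fun y : Y => y p) ⁻¹' sets p)
        = ⋂ p ∈ Sf, (fun ω => Z p.1 p.2 ω) ⁻¹' sets p := by
      rw [Set.preimage_iInter₂]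
      rfl
    rw [hν₂def, Measure.map_apply hζm (Finset.measurableSet_biInter Sf hmeasi), hpre,
      (iIndepFun_iff_measure_inter_preimage_eq_mul.1 hZindep) Sf hsets]
    refine Finset.prod_congr rfl fun p hp => ?_
    rw [Measure.map_apply hζm (hmeasi p hp)]
    rfl
  have hν₂nn : ∀ᵐ y ∂ν₂, ∀ p : ℕ × ℕ, 0 ≤ y p := by
    rw [ae_all_iff]
    intro p
    have hms : MeasurableSet {y : Y | (0:ℝ) ≤ y p} :=
      measurableSet_le measurable_const (measurable_pi_apply p)
    have h1 : ν₂ {y : Y | (0:ℝ) ≤ y p} = 1 := by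
      have := hν₂tail p 0 le_rfl
      simpa using this
    rw [ae_iff]
    have hcompl : {y : Y | ¬ (0:ℝ) ≤ y p} = {y : Y | (0:ℝ) ≤ y p}ᶜ := rfl
    rw [hcompl, measure_compl hms (measure_ne_top _ _), h1, measure_univ]
    simp
  -- the fixed-environment conclusion
  have hfixed : ∀ x ∈ H, ν₂ {y : Y | (x, y) ∈ G} = 1 := by
    intro x hx
    obtain ⟨hfin, hx1, hx2, hx3⟩ := hx
    have hsec : MeasurableSet {y : Y | (x, y) ∈ G} := measurable_prodMk_left hGm
    set Ax : ℕ → Finset ℕ := fun n =>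
      (Finset.range (Classical.choose (hfin n))).filter (fun i => x.2 n i = true) with hAx
    have hmemAx : ∀ n i, i ∈ Ax n ↔ x.2 n i = true := by
      intro n i
      rw [hAx]
      simp only [Finset.mem_filter, Finset.mem_range]
      constructor
      · exact fun h => h.2
      · intro h
        refine ⟨?_, h⟩
        by_contra hlt
        push_neg at hlt
        rw [Classical.choose_spec (hfin n) i hlt] at h
        exact Bool.false_ne_true h
    have hAxmono : ∀ n, Ax n ⊆ Ax (n+1) := by
      intro n i hi
      rw [hmemAx]
      exact hx2 n i ((hmemAx n i).1 hi)
    have hSx : ∀ n, Se n x = ENNReal.ofReal (∑ i ∈ Ax n, ((x.1 i : ℝ)) ^ γ) := by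
      intro n
      simp only [hSe]
      rw [tsum_eq_sum (s := Ax n) (fun i hi => if_neg (fun h => hi ((hmemAx n i).2 h))),
        Finset.sum_congr rfl (fun i hi => if_pos ((hmemAx n i).1 hi))]
      exact (ENNReal.ofReal_sum_of_nonneg (fun i _ => Real.rpow_nonneg (Nat.cast_nonneg _) _)).symm
    have hStend : Tendsto (fun n => ∑ i ∈ Ax n, ((x.1 i : ℝ)) ^ γ) atTop atTop := by
      rw [tendsto_atTop]
      intro b
      obtain ⟨m, hm⟩ := hx3 ⌈b⌉₊
      rw [eventually_atTop]
      refine ⟨m, fun n hn => ?_⟩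
      have h1 := hm n hn
      rw [hSx n] at h1
      have h2 : ((⌈b⌉₊ : ℕ) : ℝ) ≤ ∑ i ∈ Ax n, ((x.1 i : ℝ)) ^ γ := by
        rw [← ENNReal.ofReal_le_ofReal_iff
          (Finset.sum_nonneg fun i _ => Real.rpow_nonneg (Nat.cast_nonneg _) _),
          ENNReal.ofReal_natCast]
        exact h1
      exact le_trans (Nat.le_ceil b) h2
    have hae1 := lemA19 ν₂ γ hγ0 hγ1 x.1 hx1 Ax hAxmono hStend (fun p y => y p)
      (fun p => measurable_pi_apply p) hν₂tail hν₂indep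
    have hsub : ∀ᵐ y ∂ν₂, (x, y) ∈ G := by
      filter_upwards [hae1, hν₂nn] with y hy hynn
      obtain ⟨m, hm⟩ := hy
      refine ⟨m, fun n hn => ?_⟩
      have hTx : Te n (x, y)
          = ENNReal.ofReal (∑ i ∈ Ax n, (∑ k ∈ Finset.range (x.1 i), y (i, k)) ^ γ) := by
        simp only [hTe]
        rw [tsum_eq_sum (s := Ax n) (fun i hi => if_neg (fun h => hi ((hmemAx n i).2 h))),
          Finset.sum_congr rfl (fun i hi => if_pos ((hmemAx n i).1 hi))]
        refine (ENNReal.ofReal_sum_of_nonneg (fun i _ => ?_)).symm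
        exact Real.rpow_nonneg (Finset.sum_nonneg fun k _ => hynn (i, k)) _
      rw [hSx n, hTx, ← ENNReal.ofReal_mul (by norm_num)]
      exact ENNReal.ofReal_le_ofReal (hm n hn)
    rw [← measure_univ (μ := ν₂)]
    exact (ae_iff_measure_eq hsec.nullMeasurableSet).1 hsub
  -- assembling
  have hpairm : Measurable (fun ω => (ξ ω, ζ ω)) := hξm.prodMk hζm
  have hEmeas : MeasurableSet ((fun ω => (ξ ω, ζ ω)) ⁻¹' G) := hpairm hGm
  have hμE : μ ((fun ω => (ξ ω, ζ ω)) ⁻¹' G) = 1 := by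
    rw [← Measure.map_apply hpairm hGm, hprod, Measure.prod_apply hGm]
    have hae : ∀ᵐ x ∂ν₁, ν₂ (Prod.mk x ⁻¹' G) = 1 := by
      have hHae : ∀ᵐ x ∂ν₁, x ∈ H := by
        rw [ae_iff]
        have : {x : X | ¬ x ∈ H} = Hᶜ := rfl
        rw [this, measure_compl hHm (measure_ne_top _ _), hν₁H, measure_univ]
        simp
      filter_upwards [hHae] with x hx
      exact hfixed x hx
    rw [lintegral_congr_ae hae]
    simp
  have hfinal : ∀ᵐ ω ∂μ, ω ∈ ((fun ω => (ξ ω, ζ ω)) ⁻¹' G) := by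
    rw [ae_iff]
    have : {ω | ¬ ω ∈ ((fun ω => (ξ ω, ζ ω)) ⁻¹' G)} = ((fun ω => (ξ ω, ζ ω)) ⁻¹' G)ᶜ := rfl
    rw [this, measure_compl hEmeas (measure_ne_top _ _), hμE, measure_univ]
    simp
  filter_upwards [hfinal] with ω hω
  exact (hiff ω).1 hω
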